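/- Let φ_μ, φ_ν, φ_ω be vectors in ℂ² that are pairwise linearly independent, and let ψ_μ, ψ_ν, ψ_ω be vectors in ℂ² that are pairwise linearly independent. Then there do not exist complex numbers c₁, c₂ with φ_ω ⊗ ψ_ω = c₁·(φ_μ ⊗ ψ_μ) + c₂·(φ_ν ⊗ ψ_ν). Consequently, for a strict one-qubit fingerprinting scheme with at least three distinct inputs, the accept space spanned by the matching states φ_σ ⊗ ψ_σ has dimension at least 3. -/

import Mathlib

open scoped InnerProductSpace

/-- A concrete model of the tensor product `ℂ² ⊗ ℂ²`, realized as
`EuclideanSpace ℂ (Fin 2 × Fin 2)`; it satisfies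
`⟪tens a b, tens c d⟫ = ⟪a, c⟫ * ⟪b, d⟫`. -/
noncomputable def tens (f g : EuclideanSpace ℂ (Fin 2)) :
    EuclideanSpace ℂ (Fin 2 × Fin 2) :=
  (WithLp.equiv 2 (Fin 2 × Fin 2 → ℂ)).symm (fun ij => f ij.1 * g ij.2)

lemma tens_apply (f g : EuclideanSpace ℂ (Fin 2)) (ij : Fin 2 × Fin 2) :
    tens f g ij = f ij.1 * g ij.2 := rfl

/-- If `a, b` are linearly independent in `ℂ²` and `a ⊗ u + b ⊗ v = 0` pointwise,
then `u = v = 0`. -/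
lemma tens_indep_left (a b : EuclideanSpace ℂ (Fin 2))
    (h : LinearIndependent ℂ ![a, b]) (u v : EuclideanSpace ℂ (Fin 2))
    (h0 : ∀ i j, a i * u j + b i * v j = 0) : u = 0 ∧ v = 0 := by
  rw [LinearIndependent.pair_iff] at h
  have hj : ∀ j, u j = 0 ∧ v j = 0 := by
    intro j
    refine h (u j) (v j) ?_
    ext i
    have := h0 i j
    simp only [PiLp.add_apply, PiLp.smul_apply, smul_eq_mul, PiLp.zero_apply]
    linear_combination this
  exact ⟨by ext j; exact (hj j).1, by ext j; exact (hj j).2⟩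

theorem matching_states_dim_ge_three
    (φμ φν φω ψμ ψν ψω : EuclideanSpace ℂ (Fin 2))
    (hφ1 : LinearIndependent ℂ ![φμ, φν])
    (hφ2 : LinearIndependent ℂ ![φμ, φω])
    (hφ3 : LinearIndependent ℂ ![φν, φω])
    (hψ1 : LinearIndependent ℂ ![ψμ, ψν])
    (hψ2 : LinearIndependent ℂ ![ψμ, ψω])
    (hψ3 : LinearIndependent ℂ ![ψν, ψω]) :
    (¬ ∃ c₁ c₂ : ℂ, tens φω ψω = c₁ • tens φμ ψμ + c₂ • tens φν ψν) ∧
    3 ≤ Module.finrank ℂ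
        (Submodule.span ℂ ({tens φμ ψμ, tens φν ψν, tens φω ψω} :
          Set (EuclideanSpace ℂ (Fin 2 × Fin 2)))) := by
  -- Part 1: the nonexistence of the linear combination.
  have hmain : ¬ ∃ c₁ c₂ : ℂ, tens φω ψω = c₁ • tens φμ ψμ + c₂ • tens φν ψν := by
    rintro ⟨c₁, c₂, heq⟩
    -- φμ, φν span ℂ², so write φω = a•φμ + b•φν
    have hspan : Submodule.span ℂ (Set.range ![φμ, φν]) = ⊤ :=
      hφ1.span_eq_top_of_card_eq_finrank (by simp [finrank_euclideanSpace])
    have hmem : φω ∈ Submodule.span ℂ ({φμ, φν} : Set (EuclideanSpace ℂ (Fin 2))) := by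
      have hr : Set.range ![φμ, φν] = ({φμ, φν} : Set (EuclideanSpace ℂ (Fin 2))) := by
        ext x
        simp [Matrix.range_cons, Matrix.range_empty]
        tauto
      rw [← hr, hspan]; trivial
    obtain ⟨a, b, hab⟩ := Submodule.mem_span_pair.mp hmem
    -- Rewrite the relation as φμ ⊗ (a•ψω - c₁•ψμ) + φν ⊗ (b•ψω - c₂•ψν) = 0
    have hpt : ∀ i j, φμ i * (a • ψω - c₁ • ψμ) j + φν i * (b • ψω - c₂ • ψν) j = 0 := by
      intro i j
      have h1 : φω i * ψω j = c₁ * (φμ i * ψμ j) + c₂ * (φν i * ψν j) := by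
        have := congrArg (fun v => v (i, j)) heq
        simpa [tens_apply] using this
      have h2 : a * φμ i + b * φν i = φω i := by
        have := congrArg (fun v => v i) hab
        simpa using this
      simp only [PiLp.sub_apply, PiLp.smul_apply, smul_eq_mul]
      linear_combination ψω j * h2 + h1
    obtain ⟨hu, hv⟩ := tens_indep_left φμ φν hφ1 _ _ hpt
    -- a ≠ 0 since otherwise φω would be a multiple of φν
    have ha : a ≠ 0 := by
      rintro rfl
      have h0 : b • φν + (-1 : ℂ) • φω = 0 := by
        rw [← hab]; simp
      have := (LinearIndependent.pair_iff.mp hφ3 b (-1) h0).2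
      norm_num at this
    -- but then ψω is a multiple of ψμ, contradicting hψ2
    have h0 : c₁ • ψμ + (-a) • ψω = 0 := by
      rw [sub_eq_zero] at hu
      rw [neg_smul, ← hu]
      abel
    have := (LinearIndependent.pair_iff.mp hψ2 c₁ (-a) h0).2
    exact ha (by linear_combination -this)
  refine ⟨hmain, ?_⟩
  -- Part 2: the three matching states are linearly independent.
  have hψμ0 : ψμ ≠ 0 := hψ1.ne_zero 0
  have hψν0 : ψν ≠ 0 := hψ1.ne_zero 1
  have hindep : LinearIndependent ℂ ![tens φμ ψμ, tens φν ψν, tens φω ψω] := by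
    rw [Fintype.linearIndependent_iff]
    intro g hg
    have hsum : g 0 • tens φμ ψμ + g 1 • tens φν ψν + g 2 • tens φω ψω = 0 := by
      have := hg
      rwa [Fin.sum_univ_three] at this
    have hg2 : g 2 = 0 := by
      by_contra hg2
      apply hmain
      refine ⟨-(g 0) / g 2, -(g 1) / g 2, ?_⟩
      ext ij
      have h := congrArg (fun v => v ij) hsum
      simp only [PiLp.add_apply, PiLp.smul_apply, smul_eq_mul,
        PiLp.zero_apply] at h ⊢
      field_simp
      linear_combination h
    -- now g 0 • t1 + g 1 • t2 = 0
    have hpt : ∀ i j, φμ i * (g 0 • ψμ) j + φν i * (g 1 • ψν) j = 0 := by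
      intro i j
      have := congrArg (fun v => v (i, j)) hsum
      simp only [hg2, zero_smul, add_zero, PiLp.add_apply, PiLp.smul_apply, smul_eq_mul,
        PiLp.zero_apply, tens_apply] at this ⊢
      linear_combination this
    obtain ⟨hu, hv⟩ := tens_indep_left φμ φν hφ1 _ _ hpt
    have hg0 : g 0 = 0 := by
      by_contra h
      exact hψμ0 (by simpa [h] using smul_eq_zero.mp hu)
    have hg1 : g 1 = 0 := by
      by_contra h
      exact hψν0 (by simpa [h] using smul_eq_zero.mp hv)
    intro i
    fin_cases i <;> assumption
  have hr : Set.range ![tens φμ ψμ, tens φν ψν, tens φω ψω] =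
      ({tens φμ ψμ, tens φν ψν, tens φω ψω} :
        Set (EuclideanSpace ℂ (Fin 2 × Fin 2))) := by
    ext x
    simp [Matrix.range_cons, Matrix.range_empty]
    tauto
  rw [← hr, finrank_span_eq_card hindep]
  simp
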